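/- arXiv:1912.03097 — 4 statements merged into one kernel-verified Lean document; each statement's English description precedes it below -/
import Mathlib

section
/- For 0 < λa < 1, the characteristic polynomial of the O3 scheme has the three simple roots κ_± = [-(1+λa)(5-2λa) ± √((1+λa)(33-15λa))] / [2(1-λa)(2-λa)] and κ_0 = 1, and moreover |κ_-| > 1 while |κ_+| < 1. -/
open Complex

/-- For `0 < λa < 1`, the characteristic polynomial of the O3 scheme factorizes with
the three simple roots `κ₋`, `κ₊` and `1`, which are pairwise distinct, and moreover
`|κ₋| > 1` while `|κ₊| < 1`. -/
theorem O3_characteristic_roots (a lam : ℝ) (ha : 0 < a)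
    (h1 : 0 < lam * a) (h2 : lam * a < 1) :
    let κm : ℝ := (-(1 + lam * a) * (5 - 2 * (lam * a))
        - Real.sqrt ((1 + lam * a) * (33 - 15 * (lam * a))))
        / (2 * (1 - lam * a) * (2 - lam * a))
    let κp : ℝ := (-(1 + lam * a) * (5 - 2 * (lam * a))
        + Real.sqrt ((1 + lam * a) * (33 - 15 * (lam * a))))
        / (2 * (1 - lam * a) * (2 - lam * a))
    (∀ z : ℂ,
        ((-(lam * a * (1 - (lam * a) ^ 2)) / 6 : ℝ) : ℂ)
          + ((lam * a * (1 + lam * a) * (2 - lam * a) / 2 : ℝ) : ℂ) * z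
          + (((1 - (lam * a) ^ 2) * (2 - lam * a) / 2 : ℝ) : ℂ) * z ^ 2
          + ((-(lam * a * (1 - lam * a) * (2 - lam * a)) / 6 : ℝ) : ℂ) * z ^ 3
          - z ^ 2
        = ((-(lam * a * (1 - lam * a) * (2 - lam * a)) / 6 : ℝ) : ℂ)
            * (z - (κm : ℂ)) * (z - (κp : ℂ)) * (z - 1))
      ∧ κm ≠ κp ∧ κm ≠ 1 ∧ κp ≠ 1 ∧ 1 < |κm| ∧ |κp| < 1 := by
  intro κm κp
  have hκm : κm = (-(1 + lam * a) * (5 - 2 * (lam * a))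
        - Real.sqrt ((1 + lam * a) * (33 - 15 * (lam * a))))
        / (2 * (1 - lam * a) * (2 - lam * a)) := rfl
  have hκp : κp = (-(1 + lam * a) * (5 - 2 * (lam * a))
        + Real.sqrt ((1 + lam * a) * (33 - 15 * (lam * a))))
        / (2 * (1 - lam * a) * (2 - lam * a)) := rfl
  clear_value κm κp
  set s : ℝ := lam * a with hs
  have h1s : (0:ℝ) < 1 - s := by linarith
  have h2s : (0:ℝ) < 2 - s := by linarith
  have hT : (0:ℝ) < (1 + s) * (33 - 15 * s) := by nlinarith
  have hS0 : (0:ℝ) ≤ Real.sqrt ((1 + s) * (33 - 15 * s)) := Real.sqrt_nonneg _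
  have hS2 : Real.sqrt ((1 + s) * (33 - 15 * s)) ^ 2 = (1 + s) * (33 - 15 * s) :=
    Real.sq_sqrt hT.le
  set S : ℝ := Real.sqrt ((1 + s) * (33 - 15 * s)) with hS
  have hDpos : (0:ℝ) < 2 * (1 - s) * (2 - s) := by positivity
  have hDne : (2 * (1 - s) * (2 - s) : ℝ) ≠ 0 := ne_of_gt hDpos
  -- Vieta relations
  have hsum : (1 - s) * (2 - s) * (κm + κp) = -(1 + s) * (5 - 2 * s) := by
    rw [hκm, hκp]; field_simp; ring
  have hprod : (2 - s) * (κm * κp) = -(1 + s) := by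
    rw [hκm, hκp]; field_simp
    linear_combination (-1 : ℝ) * hS2
  -- inequalities
  have hκm_lt : κm < -1 := by
    rw [hκm, div_lt_iff₀ hDpos]
    nlinarith
  have hq0 : (0:ℝ) < 1 + 9 * s - 4 * s ^ 2 := by nlinarith
  have hq : 1 + 9 * s - 4 * s ^ 2 < S := by
    nlinarith [hS2, hS0, hq0,
      mul_pos (mul_pos h1s (mul_pos h2s h2s)) (show (0:ℝ) < 1 + 2 * s by linarith)]
  have hκp_lb : -1 < κp := by
    rw [hκp, lt_div_iff₀ hDpos]
    nlinarith
  have hSub : S < 9 - 3 * s := by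
    have h9 : (0:ℝ) < 9 - 3 * s := by linarith
    nlinarith [hS2, hS0]
  have hκp_ub : κp < 1 := by
    rw [hκp, div_lt_iff₀ hDpos]
    nlinarith
  refine ⟨?_, ne_of_lt (by linarith), ne_of_lt (by linarith), ne_of_lt hκp_ub,
    ?_, abs_lt.mpr ⟨hκp_lb, hκp_ub⟩⟩
  · -- polynomial identity
    intro z
    have hsC : ((1:ℂ) - (s:ℂ)) * (2 - (s:ℂ)) * ((κm:ℂ) + (κp:ℂ))
        = -(1 + (s:ℂ)) * (5 - 2 * (s:ℂ)) := by exact_mod_cast congrArg Complex.ofReal hsum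
    have hprodC : ((2:ℂ) - (s:ℂ)) * ((κm:ℂ) * (κp:ℂ)) = -(1 + (s:ℂ)) := by
      exact_mod_cast congrArg Complex.ofReal hprod
    push_cast
    linear_combination (-( (s:ℂ) * z * (z - 1)) / 6) * hsC
      + ((s:ℂ) * (1 - (s:ℂ)) * (z - 1) / 6) * hprodC
  · rw [abs_of_neg (by linarith : κm < 0)]
    linarith
end

section
/- Injectivity of the extrapolation boundary matrix: let κ_1, ..., κ_{τ+} be distinct nonzero complex numbers with κ_σ ≠ 1 for all σ, with multiplicities μ_σ summing to p. Suppose polynomials p_σ ∈ ℂ[X] with deg p_σ ≤ μ_σ - 1 satisfy, for some integer k_b ≥ 0, Σ_σ Q_σ(ℓ) κ_σ^ℓ = 0 for ℓ = 1, ..., p, where Q_σ(X) := Σ_{k=0}^{k_b} (1-κ_σ^{-1})^k p_σ[X-k_b, ..., X-k]. Then all p_σ = 0. Equivalently, the only sequence of the form v_j = Σ_σ p_σ(j) κ_σ^{j} satisfying (D_-^{k_b} v)_ℓ = 0 for ℓ = 1, ..., p is v = 0. -/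
open Polynomial

/-- The backward difference operator `(D₋ v)_j = v_j - v_{j-1}`. -/
def DminusSeq (v : ℤ → ℂ) : ℤ → ℂ := fun j => v j - v (j - 1)

/-- The action of `D₋` on the polynomial part: `T_κ P = P - κ⁻¹ · P(· - 1)`. -/
noncomputable def Tback (κ : ℂ) (P : Polynomial ℂ) : Polynomial ℂ :=
  P - C κ⁻¹ * P.comp (X - C 1)

lemma Tback_natDegree_le (κ : ℂ) (P : Polynomial ℂ) :
    (Tback κ P).natDegree ≤ P.natDegree := by
  unfold Tback
  refine (natDegree_sub_le _ _).trans ?_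
  have h1 : (C κ⁻¹ * P.comp (X - C 1)).natDegree ≤ P.natDegree := by
    refine (natDegree_C_mul_le _ _).trans ?_
    rw [natDegree_comp, natDegree_X_sub_C, mul_one]
  omega

lemma Tback_eq_zero {κ : ℂ} (hκ : κ ≠ 1) {P : Polynomial ℂ} (h : Tback κ P = 0) :
    P = 0 := by
  by_contra hP
  have hq : (X - C (1:ℂ)).natDegree ≠ 0 := by rw [natDegree_X_sub_C]; omega
  have hdc : (P.comp (X - C 1)).natDegree = P.natDegree := by
    rw [natDegree_comp, natDegree_X_sub_C, mul_one]
  have hlc : (P.comp (X - C 1)).coeff P.natDegree = P.leadingCoeff := by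
    rw [← hdc]
    show (P.comp (X - C 1)).leadingCoeff = _
    rw [leadingCoeff_comp hq, (monic_X_sub_C (1:ℂ)).leadingCoeff, one_pow, mul_one]
  have h0 : (Tback κ P).coeff P.natDegree = P.leadingCoeff * (1 - κ⁻¹) := by
    unfold Tback
    rw [coeff_sub, coeff_C_mul, hlc, coeff_natDegree]
    ring
  rw [h] at h0
  have : P.leadingCoeff ≠ 0 := leadingCoeff_ne_zero.2 hP
  have : (1:ℂ) - κ⁻¹ = 0 := by
    rcases mul_eq_zero.1 h0.symm with h' | h'
    · exact absurd h' this
    · exact h'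
  have : κ⁻¹ = 1 := by linear_combination -this
  exact hκ (inv_eq_one.1 this)

lemma Tback_iterate_eq_zero {κ : ℂ} (hκ : κ ≠ 1) (n : ℕ) {P : Polynomial ℂ}
    (h : (Tback κ)^[n] P = 0) : P = 0 := by
  induction n generalizing P with
  | zero => simpa using h
  | succ n IH =>
    rw [Function.iterate_succ_apply] at h
    exact Tback_eq_zero hκ (IH h)

lemma Tback_iterate_natDegree_le (κ : ℂ) (n : ℕ) (P : Polynomial ℂ) :
    ((Tback κ)^[n] P).natDegree ≤ P.natDegree := by
  induction n generalizing P with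
  | zero => simp
  | succ n IH =>
    rw [Function.iterate_succ_apply]
    exact (IH _).trans (Tback_natDegree_le κ P)

/-- Key interpolation lemma: an exponential-polynomial sequence vanishing at
`p` consecutive integers, with total multiplicity `≤ p`, is identically zero. -/
lemma key_vanish : ∀ (p : ℕ) {ι : Type} [DecidableEq ι] (s : Finset ι) (κ : ι → ℂ)
    (μ : ι → ℕ) (Q : ι → Polynomial ℂ) (a : ℤ),
    Set.InjOn κ s → (∀ i ∈ s, κ i ≠ 0) →
    (∀ i ∈ s, (Q i).natDegree < μ i) → (∑ i ∈ s, μ i) ≤ p →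
    (∀ ℓ : ℤ, a ≤ ℓ → ℓ < a + p → ∑ i ∈ s, (Q i).eval (ℓ : ℂ) * κ i ^ ℓ = 0) →
    ∀ i ∈ s, Q i = 0 := by
  intro p
  induction p with
  | zero =>
    intro ι _ s κ μ Q a hinj h0 hdeg hsum hvan i hi
    have h1 : μ i ≤ ∑ j ∈ s, μ j := Finset.single_le_sum (fun _ _ => Nat.zero_le _) hi
    have h2 := hdeg i hi
    omega
  | succ p IH =>
    intro ι _ s κ μ Q a hinj h0 hdeg hsum hvan i₀ hi₀
    set Q' : ι → Polynomial ℂ :=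
      fun i => C (κ i) * (Q i).comp (X + C 1) - C (κ i₀) * Q i with hQ'def
    -- the transformed sums vanish at p consecutive integers
    have hvan' : ∀ ℓ : ℤ, a ≤ ℓ → ℓ < a + p →
        ∑ i ∈ s, (Q' i).eval (ℓ : ℂ) * κ i ^ ℓ = 0 := by
      intro ℓ hℓ1 hℓ2
      have e1 := hvan ℓ hℓ1 (by push_cast; omega)
      have e2 := hvan (ℓ + 1) (by omega) (by push_cast; omega)
      have step : ∑ i ∈ s, (Q' i).eval (ℓ : ℂ) * κ i ^ ℓ =
          (∑ i ∈ s, (Q i).eval ((ℓ + 1 : ℤ) : ℂ) * κ i ^ (ℓ + 1)) -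
            κ i₀ * ∑ i ∈ s, (Q i).eval (ℓ : ℂ) * κ i ^ ℓ := by
        rw [Finset.mul_sum, ← Finset.sum_sub_distrib]
        refine Finset.sum_congr rfl fun i hi => ?_
        have hz : κ i ^ (ℓ + 1) = κ i ^ ℓ * κ i := zpow_add_one₀ (h0 i hi) ℓ
        simp only [hQ'def, eval_sub, eval_mul, eval_C, eval_comp, eval_add, eval_X, eval_one]
        push_cast
        rw [hz]; ring
      rw [step, e1, e2, mul_zero, sub_zero]
    -- deduce the transformed polynomials vanish away from i₀
    have h1 : ∀ i ∈ s, i ≠ i₀ → Q' i = 0 := by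
      have hdeg' : ∀ i ∈ s, (Q' i).natDegree ≤ (Q i).natDegree := by
        intro i hi
        refine (natDegree_sub_le _ _).trans ?_
        have hA : (C (κ i) * (Q i).comp (X + C 1)).natDegree ≤ (Q i).natDegree := by
          refine (natDegree_C_mul_le _ _).trans ?_
          rw [natDegree_comp, natDegree_X_add_C, mul_one]
        have hB : (C (κ i₀) * Q i).natDegree ≤ (Q i).natDegree := natDegree_C_mul_le _ _
        omega
      rcases Nat.lt_or_ge (μ i₀) 2 with hμ1 | hμ2
      · -- μ i₀ = 1 : drop i₀ from the index set
        have hQc : Q' i₀ = 0 := by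
          have : (Q i₀).natDegree = 0 := by have := hdeg i₀ hi₀; omega
          obtain ⟨c, hc⟩ := natDegree_eq_zero.1 this
          simp [hQ'def, ← hc]
        intro i hi hne
        refine IH (s.erase i₀) κ μ Q' a (hinj.mono (by simp [Finset.erase_subset]))
          (fun j hj => h0 j (Finset.mem_of_mem_erase hj))
          (fun j hj => lt_of_le_of_lt (hdeg' j (Finset.mem_of_mem_erase hj))
            (hdeg j (Finset.mem_of_mem_erase hj)))
          ?_ ?_ i (Finset.mem_erase.2 ⟨hne, hi⟩)
        · have := Finset.sum_erase_add s μ hi₀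
          have hμpos := hdeg i₀ hi₀
          omega
        · intro ℓ hℓ1 hℓ2
          rw [Finset.sum_erase s (by rw [hQc]; simp)]
          exact hvan' ℓ hℓ1 hℓ2
      · -- μ i₀ ≥ 2 : decrement the multiplicity of i₀
        have hdi₀ : (Q' i₀).natDegree < μ i₀ - 1 := by
          rcases eq_or_ne (Q i₀).natDegree 0 with hd0 | hd0
          · obtain ⟨c, hc⟩ := natDegree_eq_zero.1 hd0
            have : Q' i₀ = 0 := by simp [hQ'def, ← hc]
            rw [this]; simp; omega
          · have hQne : Q i₀ ≠ 0 := fun h => by simp [h] at hd0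
            have hq : (X + C (1:ℂ)).natDegree ≠ 0 := by rw [natDegree_X_add_C]; omega
            have hdc : ((Q i₀).comp (X + C 1)).natDegree = (Q i₀).natDegree := by
              rw [natDegree_comp, natDegree_X_add_C, mul_one]
            have hlc : ((Q i₀).comp (X + C 1)).leadingCoeff = (Q i₀).leadingCoeff := by
              rw [leadingCoeff_comp hq, (monic_X_add_C (1:ℂ)).leadingCoeff, one_pow, mul_one]
            have hcne : (Q i₀).comp (X + C 1) ≠ 0 := fun h => by
              rw [h, leadingCoeff_zero] at hlc
              exact hQne (leadingCoeff_eq_zero.1 hlc.symm)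
            have hdegeq : ((Q i₀).comp (X + C 1)).degree = (Q i₀).degree := by
              rw [degree_eq_natDegree hcne, degree_eq_natDegree hQne, hdc]
            have hsub := degree_sub_lt hdegeq hcne hlc
            rw [hdegeq] at hsub
            have hnd : ((Q i₀).comp (X + C 1) - Q i₀).natDegree < (Q i₀).natDegree := by
              rcases eq_or_ne ((Q i₀).comp (X + C 1) - Q i₀) 0 with h | h
              · rw [h]; simp; omega
              · exact natDegree_lt_natDegree h hsub
            have hrw : Q' i₀ = C (κ i₀) * ((Q i₀).comp (X + C 1) - Q i₀) := by
              simp [hQ'def, mul_sub]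
            have := (hrw ▸ natDegree_C_mul_le (κ i₀) _)
            have := hdeg i₀ hi₀
            omega
        intro i hi hne
        refine IH s κ (Function.update μ i₀ (μ i₀ - 1)) Q' a hinj h0 ?_ ?_ hvan' i hi
        · intro j hj
          rcases eq_or_ne j i₀ with rfl | hji
          · rw [Function.update_self]; exact hdi₀
          · rw [Function.update_of_ne hji]
            exact lt_of_le_of_lt (hdeg' j hj) (hdeg j hj)
        · rw [Finset.sum_update_of_mem hi₀, Finset.sdiff_singleton_eq_erase]
          have := Finset.sum_erase_add s μ hi₀
          omega
    -- deduce the original polynomials vanish away from i₀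
    have h2 : ∀ i ∈ s, i ≠ i₀ → Q i = 0 := by
      intro i hi hne
      by_contra hQne
      have hq : (X + C (1:ℂ)).natDegree ≠ 0 := by rw [natDegree_X_add_C]; omega
      have hlc : ((Q i).comp (X + C 1)).leadingCoeff = (Q i).leadingCoeff := by
        rw [leadingCoeff_comp hq, (monic_X_add_C (1:ℂ)).leadingCoeff, one_pow, mul_one]
      have heq : C (κ i) * (Q i).comp (X + C 1) = C (κ i₀) * Q i :=
        sub_eq_zero.1 (h1 i hi hne)
      have hlceq := congrArg leadingCoeff heq
      rw [leadingCoeff_mul, leadingCoeff_mul, leadingCoeff_C, leadingCoeff_C, hlc] at hlceq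
      have hlcne : (Q i).leadingCoeff ≠ 0 := leadingCoeff_ne_zero.2 hQne
      have : κ i = κ i₀ := mul_right_cancel₀ hlcne hlceq
      exact hne (hinj hi hi₀ this)
    -- finally kill Q i₀ using the p+1 interpolation conditions
    have h3 : Q i₀ = 0 := by
      have heval : ∀ ℓ : ℤ, a ≤ ℓ → ℓ < a + (p + 1 : ℕ) → (Q i₀).eval (ℓ : ℂ) = 0 := by
        intro ℓ hℓ1 hℓ2
        have := hvan ℓ hℓ1 hℓ2
        rw [Finset.sum_eq_single_of_mem i₀ hi₀
          (fun i hi hne => by rw [h2 i hi hne]; simp)] at this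
        have hκ := zpow_ne_zero ℓ (h0 i₀ hi₀)
        exact (mul_eq_zero.1 this).resolve_right hκ
      refine eq_zero_of_natDegree_lt_card_of_eval_eq_zero (Q i₀)
        (f := fun k : Fin (p + 1) => ((a + (k : ℤ) : ℤ) : ℂ)) ?_ ?_ ?_
      · intro x y hxy
        have h' : ((a + (x : ℤ) : ℤ) : ℂ) = ((a + (y : ℤ) : ℤ) : ℂ) := hxy
        have h'' : (a + (x : ℤ)) = a + (y : ℤ) := by exact_mod_cast h'
        have : (x : ℤ) = (y : ℤ) := by omega
        exact Fin.ext (by exact_mod_cast this)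
      · intro k
        refine heval (a + (k : ℤ)) (by omega) ?_
        have : (k : ℤ) < (p + 1 : ℕ) := by exact_mod_cast k.isLt
        push_cast at this ⊢
        omega
      · have hμ := hdeg i₀ hi₀
        have hμle : μ i₀ ≤ ∑ j ∈ s, μ j :=
          Finset.single_le_sum (fun _ _ => Nat.zero_le _) hi₀
        simp only [Fintype.card_fin]
        omega
    exact h3

lemma Dminus_iterate_form {τ : ℕ} (κ : Fin τ → ℂ) (h0 : ∀ σ, κ σ ≠ 0) (kb : ℕ) :
    ∀ (P : Fin τ → Polynomial ℂ) (v : ℤ → ℂ),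
      (∀ j : ℤ, v j = ∑ σ, (P σ).eval (j : ℂ) * κ σ ^ j) →
      ∀ j : ℤ, (DminusSeq^[kb] v) j =
        ∑ σ, ((Tback (κ σ))^[kb] (P σ)).eval (j : ℂ) * κ σ ^ j := by
  induction kb with
  | zero => intro P v hv j; simpa using hv j
  | succ kb IH =>
    intro P v hv j
    rw [Function.iterate_succ_apply]
    have hstep : ∀ j : ℤ, DminusSeq v j =
        ∑ σ, (Tback (κ σ) (P σ)).eval (j : ℂ) * κ σ ^ j := by
      intro j
      unfold DminusSeq
      rw [hv j, hv (j - 1), ← Finset.sum_sub_distrib]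
      refine Finset.sum_congr rfl fun σ _ => ?_
      have hz : κ σ ^ (j - 1) = κ σ ^ j * (κ σ)⁻¹ := zpow_sub_one₀ (h0 σ) j
      unfold Tback
      simp only [eval_sub, eval_mul, eval_C, eval_comp, eval_X, eval_one]
      push_cast
      rw [hz]; ring
    have := IH (fun σ => Tback (κ σ) (P σ)) (DminusSeq v) hstep j
    rw [this]
    refine Finset.sum_congr rfl fun σ _ => ?_
    rw [← Function.iterate_succ_apply]

/-- Injectivity of the extrapolation boundary matrix: with distinct nonzero
`κ_σ ≠ 1` and polynomials `p_σ` of degree `≤ μ_σ - 1`, `∑ μ_σ = p`, the only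
sequence `v_j = ∑_σ p_σ(j) κ_σ^j` satisfying the extrapolation conditions
`(D₋^{k_b} v)_ℓ = 0` for `ℓ = 1, …, p` is `v = 0`, i.e. all `p_σ = 0`. -/
theorem extrapolation_boundary_matrix_injective (τ p kb : ℕ)
    (κ : Fin τ → ℂ) (hdist : Function.Injective κ)
    (hne0 : ∀ σ, κ σ ≠ 0) (hne1 : ∀ σ, κ σ ≠ 1)
    (μ : Fin τ → ℕ) (hμ : ∀ σ, 1 ≤ μ σ) (hsum : ∑ σ, μ σ = p)
    (P : Fin τ → Polynomial ℂ) (hdeg : ∀ σ, (P σ).natDegree ≤ μ σ - 1)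
    (v : ℤ → ℂ) (hv : ∀ j : ℤ, v j = ∑ σ, (P σ).eval (j : ℂ) * κ σ ^ j)
    (hbc : ∀ ℓ : ℤ, 1 ≤ ℓ → ℓ ≤ (p : ℤ) → (DminusSeq^[kb] v) ℓ = 0) :
    ∀ σ, P σ = 0 := by
  intro σ
  have hform := Dminus_iterate_form κ hne0 kb P v hv
  have hQ0 : ∀ σ, (Tback (κ σ))^[kb] (P σ) = 0 := by
    have := key_vanish p (Finset.univ : Finset (Fin τ)) κ μ
      (fun σ => (Tback (κ σ))^[kb] (P σ)) 1
      (hdist.injOn) (fun σ _ => hne0 σ)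
      (fun σ _ => by
        show ((Tback (κ σ))^[kb] (P σ)).natDegree < μ σ
        have h1 := Tback_iterate_natDegree_le (κ σ) kb (P σ)
        have h2 := hdeg σ
        have h3 := hμ σ
        omega)
      (le_of_eq hsum)
      (fun ℓ hℓ1 hℓ2 => by rw [← hform ℓ]; exact hbc ℓ hℓ1 (by omega))
    intro σ; exact this σ (Finset.mem_univ σ)
  exact Tback_iterate_eq_zero (hne1 σ) kb (hQ0 σ)
end

section
/- Interior consistency error estimate in ℓ²: let the scheme coefficients satisfy Σ_ℓ ℓ^m a_ℓ = (-λa)^m for m = 0, ..., k. Then there is C > 0 (depending on the coefficients, λ, a, k) such that for all ξ ∈ ℝ and Δx > 0, |e^{-iaλΔxξ} - Σ_{ℓ=-r}^p a_ℓ e^{iℓΔxξ}| ≤ C (Δx|ξ|)^{k+1}. Consequently, for f ∈ H^{k+1}(ℝ), (1/Δt)‖f(· - aΔt) - Σ_ℓ a_ℓ f(· + ℓΔx)‖_{L²(ℝ)} ≤ C' Δx^k ‖f‖_{H^{k+1}(ℝ)} where Δt = λΔx. -/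
open MeasureTheory Finset
open scoped ENNReal NNReal
set_option maxHeartbeats 1000000


lemma abs_le_of_mem_uIcc {t y : ℝ} (hy : y ∈ Set.uIcc 0 t) : |y| ≤ |t| := by
  rcases Set.mem_uIcc.1 hy with ⟨h1, h2⟩ | ⟨h1, h2⟩ <;> rw [abs_le] <;>
    constructor <;> cases abs_cases t <;> linarith

lemma chain_bound (M : ℝ) :
    ∀ (k : ℕ) (F : ℕ → ℝ → ℂ),
    (∀ m ≤ k, ∀ t : ℝ, HasDerivAt (F m) (F (m+1) t) t) →
    (∀ m ≤ k, F m 0 = 0) →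
    (∀ t : ℝ, ‖F (k+1) t‖ ≤ M) →
    ∀ t : ℝ, ‖F 0 t‖ ≤ M * |t| ^ (k+1) := by
  intro k
  induction k with
  | zero =>
    intro F hF h0 hM t
    have := (convex_univ (𝕜 := ℝ) (E := ℝ)).norm_image_sub_le_of_norm_hasDerivWithin_le
      (f := F 0) (f' := F 1) (C := M)
      (fun y _ => (hF 0 le_rfl y).hasDerivWithinAt) (fun y _ => hM y)
      (Set.mem_univ 0) (Set.mem_univ t)
    simpa [h0 0 le_rfl, Real.norm_eq_abs] using this
  | succ k ih =>
    intro F hF h0 hM t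
    have h1 : ∀ s : ℝ, ‖F 1 s‖ ≤ M * |s| ^ (k+1) :=
      ih (fun m => F (m+1)) (fun m hm s => hF (m+1) (by omega) s)
        (fun m hm => h0 (m+1) (by omega)) hM
    have := (convex_uIcc (0:ℝ) t).norm_image_sub_le_of_norm_hasDerivWithin_le
      (f := F 0) (f' := F 1) (C := M * |t| ^ (k+1))
      (fun y _ => (hF 0 (by omega) y).hasDerivWithinAt)
      (fun y hy => (h1 y).trans (by
        have hMnn : 0 ≤ M := le_trans (norm_nonneg _) (hM 0)
        exact mul_le_mul_of_nonneg_left (pow_le_pow_left₀ (abs_nonneg _)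
          (abs_le_of_mem_uIcc hy) _) hMnn))
      Set.left_mem_uIcc Set.right_mem_uIcc
    have h00 := h0 0 (by omega)
    rw [h00, sub_zero, Real.norm_eq_abs, sub_zero] at this
    calc ‖F 0 t‖ ≤ M * |t| ^ (k+1) * |t| := this
    _ = M * |t| ^ (k+1+1) := by ring


lemma hasDerivAt_cexp_mul (c : ℂ) (θ : ℝ) :
    HasDerivAt (fun θ : ℝ => Complex.exp (c * θ)) (c * Complex.exp (c * θ)) θ := by
  have h1 : HasDerivAt (fun θ : ℝ => (θ : ℂ)) 1 θ := by
    exact Complex.ofRealCLM.hasDerivAt (x := θ)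
  have := (h1.const_mul c).cexp
  simpa [mul_comm] using this


lemma taylor_int (k : ℕ) (f : ℝ → ℂ) (hf : ContDiff ℝ (k+1 : ℕ) f) (x h : ℝ) :
    f (x + h) - ∑ m ∈ Finset.range (k+1), ((h^m / m.factorial : ℝ)) • iteratedDeriv m f x
    = ∫ t in (0:ℝ)..1, (((1-t)^k * h^(k+1) / k.factorial : ℝ)) •
        iteratedDeriv (k+1) f (x + t*h) := by
  have hFd : ∀ m, m ≤ k → ∀ y : ℝ,
      HasDerivAt (iteratedDeriv m f) (iteratedDeriv (m+1) f y) y := by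
    intro m hm y
    have hdiff : Differentiable ℝ (iteratedDeriv m f) :=
      hf.differentiable_iteratedDeriv m (by exact_mod_cast Nat.lt_succ_of_le hm)
    have h1 := (hdiff y).hasDerivAt
    rw [iteratedDeriv_succ]
    exact h1
  have hgcont : Continuous (iteratedDeriv (k+1) f) :=
    hf.continuous_iteratedDeriv (k+1) (by exact_mod_cast le_rfl)
  set φ : ℝ → ℂ := fun t => ∑ m ∈ Finset.range (k+1),
    (((1-t)^m * h^m / m.factorial : ℝ)) • iteratedDeriv m f (x + t*h) with hφ
  set w : ℕ → ℝ → ℂ := fun m t => match m with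
    | 0 => 0
    | (j+1) => (((1-t)^j * h^(j+1) / j.factorial : ℝ)) • iteratedDeriv (j+1) f (x + t*h)
    with hw
  have hterm : ∀ t : ℝ, ∀ m ∈ Finset.range (k+1), HasDerivAt
      (fun t => (((1-t)^m * h^m / m.factorial : ℝ)) • iteratedDeriv m f (x + t*h))
      (w (m+1) t - w m t) t := by
    intro t m hm
    rw [Finset.mem_range, Nat.lt_succ_iff] at hm
    have hc : HasDerivAt (fun t : ℝ => (1-t)^m * h^m / m.factorial)
        (((m:ℝ) * (1-t)^(m-1) * (-1)) * h^m / m.factorial) t :=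
      ((((hasDerivAt_id t).const_sub 1).pow m).mul_const (h^m)).div_const _
    have hinner : HasDerivAt (fun t : ℝ => x + t*h) h t := by
      simpa using ((hasDerivAt_id t).mul_const h).const_add x
    have hv : HasDerivAt (fun t : ℝ => iteratedDeriv m f (x + t*h))
        (h • iteratedDeriv (m+1) f (x + t*h)) t := by
      have := (hFd m hm (x + t*h)).scomp t hinner
      exact this
    have hprod := hc.smul hv
    refine hprod.congr_deriv ?_
    symm
    have hz2 := iteratedDeriv (m+1) f (x + t*h)
    rw [smul_smul]
    match m with
    | 0 =>
      simp [hw]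
    | (j+1) =>
      have hfac : ((j+1).factorial : ℝ) = (j+1) * j.factorial := by
        rw [Nat.factorial_succ]; push_cast; ring
      have hjne : (j.factorial : ℝ) ≠ 0 := Nat.cast_ne_zero.2 (Nat.factorial_ne_zero j)
      have e1 : ((1-t)^(j+1) * h^(j+1) / (j+1).factorial) * h
          = (1-t)^(j+1) * h^(j+1+1) / (j+1).factorial := by ring
      have e2 : (((j+1:ℕ):ℝ) * (1-t)^(j+1-1) * (-1)) * h^(j+1) / (j+1).factorial
          = -((1-t)^j * h^(j+1) / j.factorial) := by
        rw [hfac, Nat.add_sub_cancel]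
        push_cast
        field_simp
      rw [e1, e2, sub_eq_add_neg, ← neg_smul]
  have hφd : ∀ t : ℝ, HasDerivAt φ
      ((((1-t)^k * h^(k+1) / k.factorial : ℝ)) • iteratedDeriv (k+1) f (x + t*h)) t := by
    intro t
    have hsum := HasDerivAt.fun_sum (hterm t)
    rw [Finset.sum_range_sub (f := fun m => w m t)] at hsum
    have hw0 : w 0 t = 0 := rfl
    have hwk : w (k+1) t
        = (((1-t)^k * h^(k+1) / k.factorial : ℝ)) • iteratedDeriv (k+1) f (x + t*h) := rfl
    rw [hwk, hw0, sub_zero] at hsum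
    exact hsum
  have hint : IntervalIntegrable
      (fun t => (((1-t)^k * h^(k+1) / k.factorial : ℝ)) • iteratedDeriv (k+1) f (x + t*h))
      volume 0 1 := by
    apply Continuous.intervalIntegrable
    exact ((((continuous_const.sub continuous_id).pow k).mul continuous_const).div_const _).smul
      (hgcont.comp (continuous_const.add (continuous_id.mul continuous_const)))
  rw [intervalIntegral.integral_eq_sub_of_hasDerivAt (fun t _ => hφd t) hint]
  have hφ1 : φ 1 = f (x + h) := by
    simp only [hφ]
    rw [Finset.sum_eq_single 0]
    · norm_num
    · intro b _ hb0
      simp [sub_self, zero_pow hb0]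
    · intro habs
      exact absurd (Finset.mem_range.2 (Nat.succ_pos k)) habs
  have hφ0 : φ 0 = ∑ m ∈ Finset.range (k+1), ((h^m / m.factorial : ℝ)) • iteratedDeriv m f x := by
    simp only [hφ]
    refine Finset.sum_congr rfl fun m _ => ?_
    norm_num
  rw [hφ1, hφ0]


lemma remL2 (g : ℝ → ℂ) (hg : Continuous g) (h : ℝ) (k : ℕ) :
    eLpNorm (fun x => ∫ t in (0:ℝ)..1, ((1-t)^k : ℝ) • g (x + t*h)) 2 volume
      ≤ eLpNorm g 2 volume := by
  set ν := volume.restrict (Set.Ioc (0:ℝ) 1) with hν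
  have hν1 : ν Set.univ = 1 := by
    simp [hν, Real.volume_Ioc]
  have hgc : ∀ x : ℝ, Continuous fun t : ℝ => g (x + t*h) :=
    fun x => hg.comp (continuous_const.add (continuous_id.mul continuous_const))
  set G : ℝ → ℝ := fun x => ∫ t in (0:ℝ)..1, ‖g (x + t*h)‖ with hGdef
  have hGnn : ∀ x, 0 ≤ G x := fun x =>
    intervalIntegral.integral_nonneg zero_le_one (fun u _ => norm_nonneg _)
  have step1 : ∀ x, ‖∫ t in (0:ℝ)..1, ((1-t)^k : ℝ) • g (x + t*h)‖ ≤ G x := by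
    intro x
    refine (intervalIntegral.norm_integral_le_integral_norm zero_le_one).trans ?_
    refine intervalIntegral.integral_mono_on zero_le_one ?_ ?_ ?_
    · exact (((continuous_const.sub continuous_id).pow k).smul (hgc x)).norm.intervalIntegrable 0 1
    · exact ((hgc x).norm).intervalIntegrable 0 1
    · intro t ht
      rw [norm_smul]
      have h1 : ‖((1-t)^k : ℝ)‖ ≤ 1 := by
        rw [Real.norm_eq_abs, abs_pow]
        apply pow_le_one₀ (abs_nonneg _)
        rw [abs_le]
        constructor
        · linarith [ht.2]
        · linarith [ht.1]
      nlinarith [norm_nonneg (g (x+t*h)), norm_nonneg ((1-t)^k : ℝ)]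
  refine (eLpNorm_mono_real step1).trans ?_
  rw [eLpNorm_eq_lintegral_rpow_enorm_toReal (by norm_num : (2:ℝ≥0∞) ≠ 0) ENNReal.ofNat_ne_top,
      eLpNorm_eq_lintegral_rpow_enorm_toReal (by norm_num : (2:ℝ≥0∞) ≠ 0) ENNReal.ofNat_ne_top]
  have htr : (2:ℝ≥0∞).toReal = 2 := by norm_num
  rw [htr]
  refine ENNReal.rpow_le_rpow ?_ (by norm_num)
  set u : ℝ → ℝ → ℝ≥0∞ := fun x t => (‖g (x + t*h)‖₊ : ℝ≥0∞) with hu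
  have hum : ∀ x, Measurable (u x) := fun x => ((hgc x).measurable).enorm
  have claimA : ∀ x, (‖G x‖₊ : ℝ≥0∞) = ∫⁻ t, u x t ∂ν := by
    intro x
    rw [← enorm_eq_nnnorm, Real.enorm_eq_ofReal (hGnn x)]
    have hI : G x = ∫ t in Set.Ioc (0:ℝ) 1, ‖g (x+t*h)‖ :=
      intervalIntegral.integral_of_le zero_le_one
    rw [hI, ofReal_integral_eq_lintegral_ofReal
      (((hgc x).norm.intervalIntegrable 0 1).1)
      (Filter.Eventually.of_forall fun t => norm_nonneg _)]
    exact lintegral_congr fun t => ofReal_norm_eq_enorm _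
  have hconj : Real.HolderConjugate 2 2 := Real.HolderConjugate.two_two
  have claimB : ∀ x, (‖G x‖₊ : ℝ≥0∞)^(2:ℝ) ≤ ∫⁻ t, (u x t)^(2:ℝ) ∂ν := by
    intro x
    have CS := ENNReal.lintegral_mul_le_Lp_mul_Lq ν hconj
      ((hum x).aemeasurable) (aemeasurable_const (b := (1:ℝ≥0∞)))
    simp only [Pi.mul_apply, mul_one, ENNReal.one_rpow, lintegral_const, hν1, one_mul,
      ENNReal.one_rpow, ENNReal.rpow_one] at CS
    have : (‖G x‖₊ : ℝ≥0∞) ≤ (∫⁻ t, (u x t)^(2:ℝ) ∂ν)^(1/2:ℝ) := by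
      rw [claimA]; simpa using CS
    calc (‖G x‖₊ : ℝ≥0∞)^(2:ℝ) ≤ ((∫⁻ t, (u x t)^(2:ℝ) ∂ν)^(1/2:ℝ))^(2:ℝ) :=
          ENNReal.rpow_le_rpow this (by norm_num)
      _ = ∫⁻ t, (u x t)^(2:ℝ) ∂ν := by
          rw [← ENNReal.rpow_mul]; norm_num
  calc ∫⁻ x, (‖G x‖₊ : ℝ≥0∞)^(2:ℝ) ≤ ∫⁻ x, ∫⁻ t, (u x t)^(2:ℝ) ∂ν := lintegral_mono claimB
    _ = ∫⁻ t, (∫⁻ x, (u x t)^(2:ℝ)) ∂ν := by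
        have hmeas : AEMeasurable (Function.uncurry fun x t => u x t ^ (2:ℝ))
            ((volume : Measure ℝ).prod ν) := by
          simp only [ENNReal.rpow_two, hu]
          exact (((hg.comp (continuous_fst.add
            (continuous_snd.mul continuous_const))).measurable).enorm.pow_const 2).aemeasurable
        exact lintegral_lintegral_swap (μ := (volume : Measure ℝ)) (ν := ν)
          (f := fun x t => u x t ^ (2:ℝ)) hmeas
    _ = ∫⁻ t, (∫⁻ x, (‖g x‖₊ : ℝ≥0∞)^(2:ℝ)) ∂ν := by
        refine lintegral_congr (μ := ν) (f := fun t => ∫⁻ (x : ℝ), u x t ^ (2:ℝ))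
          (g := fun _ => ∫⁻ (x : ℝ), (‖g x‖₊ : ℝ≥0∞) ^ (2:ℝ)) fun t => ?_
        have hm : Measurable fun y : ℝ => (‖g y‖₊ : ℝ≥0∞)^(2:ℝ) := by
          simp only [ENNReal.rpow_two]
          exact hg.measurable.enorm.pow_const 2
        have := (measurePreserving_add_right volume (t*h)).lintegral_comp hm
        simpa using this
    _ = ∫⁻ x, (‖g x‖₊ : ℝ≥0∞)^(2:ℝ) := by
        rw [lintegral_const, hν1, mul_one]

lemma part1_aux (r p k : ℕ) (a lam : ℝ) (ha : 0 < a) (hlam : 0 < lam)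
    (coef : ℤ → ℝ)
    (hcons : ∀ m : ℕ, m ≤ k →
      ∑ ℓ ∈ Finset.Icc (-(r : ℤ)) (p : ℤ), coef ℓ * (ℓ : ℝ) ^ m = (-(lam * a)) ^ m) :
    (∃ C > 0, ∀ (ξ Δx : ℝ), 0 < Δx →
      ‖Complex.exp (-(Complex.I * (a * lam * Δx * ξ)))
          - ∑ ℓ ∈ Finset.Icc (-(r : ℤ)) (p : ℤ),
              (coef ℓ : ℂ) * Complex.exp (Complex.I * (ℓ * Δx * ξ))‖
        ≤ C * (Δx * |ξ|) ^ (k + 1)) := by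
  classical
  set c : ℂ := -(Complex.I * (a * lam)) with hc
  set S := Finset.Icc (-(r : ℤ)) (p : ℤ) with hS
  set G : ℕ → ℝ → ℂ := fun m θ =>
    c ^ m * Complex.exp (c * θ)
      - ∑ ℓ ∈ S, (coef ℓ : ℂ) * ((Complex.I * ℓ) ^ m * Complex.exp ((Complex.I * ℓ) * θ))
    with hG
  have hderiv : ∀ m (θ : ℝ), HasDerivAt (G m) (G (m+1) θ) θ := by
    intro m θ
    have h1 : HasDerivAt (fun θ : ℝ => c ^ m * Complex.exp (c * θ))
        (c ^ (m+1) * Complex.exp (c * θ)) θ := by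
      have := (hasDerivAt_cexp_mul c θ).const_mul (c ^ m)
      exact this.congr_deriv (by ring)
    have h2 : ∀ ℓ ∈ S, HasDerivAt
        (fun θ : ℝ => (coef ℓ : ℂ) * ((Complex.I * ℓ) ^ m * Complex.exp ((Complex.I * ℓ) * θ)))
        ((coef ℓ : ℂ) * ((Complex.I * ℓ) ^ (m+1) * Complex.exp ((Complex.I * ℓ) * θ))) θ := by
      intro ℓ _
      have := ((hasDerivAt_cexp_mul (Complex.I * ℓ) θ).const_mul ((Complex.I * ℓ) ^ m)).const_mul (coef ℓ : ℂ)
      exact this.congr_deriv (by ring)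
    exact h1.sub (HasDerivAt.fun_sum h2)
  have hzero : ∀ m ≤ k, G m 0 = 0 := by
    intro m hm
    have key := hcons m hm
    have keyC : (∑ ℓ ∈ S, (coef ℓ:ℂ) * (ℓ:ℂ) ^ m) = (-(lam*a) : ℂ) ^ m := by
      exact_mod_cast congrArg Complex.ofReal key
    have hGm : G m 0 = Complex.I ^ m * ((-(↑a*↑lam:ℂ))^m - ∑ ℓ ∈ S, (coef ℓ:ℂ) * (ℓ:ℂ)^m) := by
      simp only [hG, Complex.ofReal_zero, mul_zero, Complex.exp_zero, mul_one, mul_sub,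
        Finset.mul_sum]
      congr 1
      · rw [hc, show -(Complex.I * (↑a * ↑lam)) = Complex.I * (-(↑a*↑lam)) by ring, mul_pow]
      · exact Finset.sum_congr rfl (fun ℓ _ => by rw [mul_pow]; ring)
    rw [hGm, keyC]
    ring_nf
  set M : ℝ := (a*lam)^(k+1) + ∑ ℓ ∈ S, |coef ℓ| * |(ℓ:ℝ)|^(k+1) with hMdef
  have hMbound : ∀ θ : ℝ, ‖G (k+1) θ‖ ≤ M := by
    intro θ
    have hb1 : ‖c ^ (k+1) * Complex.exp (c * θ)‖ = (a*lam)^(k+1) := by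
      rw [norm_mul, norm_pow, Complex.norm_exp]
      have h1 : ‖c‖ = a * lam := by
        simp [hc, abs_of_pos ha, abs_of_pos hlam]
      have h2 : (c * (θ:ℂ)).re = 0 := by simp [hc]
      rw [h1, h2, Real.exp_zero, mul_one]
    have hb2 : ∀ ℓ ∈ S, ‖(coef ℓ:ℂ) * ((Complex.I * ℓ) ^ (k+1) * Complex.exp ((Complex.I * ℓ) * θ))‖
        = |coef ℓ| * |(ℓ:ℝ)|^(k+1) := by
      intro ℓ _
      rw [norm_mul, norm_mul, norm_pow, Complex.norm_exp]
      have h1 : ‖Complex.I * (ℓ:ℂ)‖ = |(ℓ:ℝ)| := by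
        rw [norm_mul, Complex.norm_I, one_mul]
        simp
      have h2 : ((Complex.I * (ℓ:ℂ)) * (θ:ℂ)).re = 0 := by simp
      rw [h1, h2, Real.exp_zero, mul_one, Complex.norm_real, Real.norm_eq_abs]
    calc ‖G (k+1) θ‖ ≤ ‖c ^ (k+1) * Complex.exp (c * θ)‖
          + ‖∑ ℓ ∈ S, (coef ℓ:ℂ) * ((Complex.I * ℓ) ^ (k+1) * Complex.exp ((Complex.I * ℓ) * θ))‖ :=
        norm_sub_le _ _
      _ ≤ (a*lam)^(k+1) + ∑ ℓ ∈ S, |coef ℓ| * |(ℓ:ℝ)|^(k+1) := by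
          refine add_le_add hb1.le ?_
          refine (norm_sum_le _ _).trans ?_
          exact Finset.sum_le_sum fun ℓ hℓ => (hb2 ℓ hℓ).le
  have hMnn : 0 ≤ M := le_trans (norm_nonneg _) (hMbound 0)
  have chainres := chain_bound M k G (fun m _ => hderiv m) hzero hMbound
  refine ⟨M + 1, by linarith, fun ξ Δx hΔx => ?_⟩
  have hEq : Complex.exp (-(Complex.I * (a * lam * Δx * ξ)))
        - ∑ ℓ ∈ S, (coef ℓ : ℂ) * Complex.exp (Complex.I * (ℓ * Δx * ξ)) = G 0 (Δx * ξ) := by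
    simp only [hG, pow_zero, one_mul, hc]
    congr 1
    · congr 1; push_cast; ring
    · exact Finset.sum_congr rfl fun ℓ _ => by congr 2; push_cast; ring
  calc ‖Complex.exp (-(Complex.I * (a * lam * Δx * ξ)))
        - ∑ ℓ ∈ S, (coef ℓ : ℂ) * Complex.exp (Complex.I * (ℓ * Δx * ξ))‖
      = ‖G 0 (Δx * ξ)‖ := by rw [hEq]
    _ ≤ M * |Δx * ξ| ^ (k+1) := chainres _
    _ ≤ (M + 1) * (Δx * |ξ|) ^ (k+1) := by
        rw [abs_mul, abs_of_pos hΔx]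
        exact mul_le_mul_of_nonneg_right (by linarith) (by positivity)

lemma part2_aux (r p k : ℕ) (a lam : ℝ) (ha : 0 < a) (hlam : 0 < lam) (coef : ℤ → ℝ)
    (hcons : ∀ m : ℕ, m ≤ k →
      ∑ ℓ ∈ Finset.Icc (-(r : ℤ)) (p : ℤ), coef ℓ * (ℓ : ℝ) ^ m = (-(lam * a)) ^ m) :
    ∃ C' > 0, ∀ Δx : ℝ, 0 < Δx → ∀ f : ℝ → ℂ,
      ContDiff ℝ (k + 1 : ℕ) f →
      (∀ m : ℕ, m ≤ k + 1 → MemLp (iteratedDeriv m f) 2 volume) →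
      (eLpNorm (fun x : ℝ => f (x - a * (lam * Δx))
          - ∑ ℓ ∈ Finset.Icc (-(r : ℤ)) (p : ℤ), (coef ℓ : ℂ) * f (x + ℓ * Δx))
        2 volume).toReal / (lam * Δx)
      ≤ C' * Δx ^ k *
          ∑ m ∈ Finset.range (k + 2), (eLpNorm (iteratedDeriv m f) 2 volume).toReal := by
  classical
  set S := Finset.Icc (-(r:ℤ)) (p:ℤ) with hS
  set A : ℝ := (a*lam)^(k+1) + ∑ ℓ ∈ S, |coef ℓ| * |(ℓ:ℝ)|^(k+1) with hA
  have hAnn : 0 ≤ A := by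
    apply add_nonneg (by positivity)
    exact Finset.sum_nonneg fun ℓ _ => by positivity
  refine ⟨A/lam + 1, by positivity, ?_⟩
  intro Δx hΔx f hf hmem
  set g := iteratedDeriv (k+1) f with hg
  have hgc : Continuous g := hf.continuous_iteratedDeriv (k+1) (by exact_mod_cast le_rfl)
  set Q : ℝ → ℝ → ℂ := fun h x => f (x + h)
      - ∑ m ∈ Finset.range (k+1), ((h^m / m.factorial : ℝ)) • iteratedDeriv m f x with hQ
  have hQcont : ∀ h, Continuous (Q h) := by
    intro h
    apply Continuous.sub
    · exact hf.continuous.comp (continuous_id.add continuous_const)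
    · exact continuous_finset_sum _ fun m hm => Continuous.fun_const_smul
        (hf.continuous_iteratedDeriv m
          (by exact_mod_cast (show m ≤ k+1 by have := Finset.mem_range.1 hm; omega))) _
  have hQbound : ∀ h : ℝ, eLpNorm (Q h) 2 volume
      ≤ ENNReal.ofReal (|h|^(k+1)) * eLpNorm g 2 volume := by
    intro h
    have hid : Q h = fun x => ((h^(k+1) / k.factorial : ℝ)) •
        ∫ t in (0:ℝ)..1, ((1-t)^k : ℝ) • g (x + t*h) := by
      funext x
      simp only [hQ]
      rw [taylor_int k f hf x h, ← intervalIntegral.integral_smul]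
      congr 1; funext t; rw [smul_smul]; congr 1; ring
    rw [hid, show (fun x => ((h^(k+1) / k.factorial : ℝ)) •
        ∫ t in (0:ℝ)..1, ((1-t)^k : ℝ) • g (x + t*h))
      = ((h^(k+1) / (k.factorial : ℝ))) • (fun x => ∫ t in (0:ℝ)..1, ((1-t)^k : ℝ) • g (x + t*h))
      from rfl, eLpNorm_const_smul]
    have h1 : ‖(h ^ (k+1) / (k.factorial : ℝ))‖ₑ ≤ ENNReal.ofReal (|h|^(k+1)) := by
      rw [Real.enorm_eq_ofReal_abs]
      apply ENNReal.ofReal_le_ofReal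
      rw [abs_div, abs_pow]
      have hk1 : (1:ℝ) ≤ |(k.factorial : ℝ)| := by
        rw [abs_of_nonneg (by positivity)]
        exact_mod_cast Nat.one_le_iff_ne_zero.2 (Nat.factorial_ne_zero k)
      calc |h|^(k+1) / |(k.factorial : ℝ)| ≤ |h|^(k+1) / 1 := by
            apply div_le_div_of_nonneg_left (by positivity) (by norm_num) hk1
        _ = |h|^(k+1) := div_one _
    exact mul_le_mul' h1 (remL2 g hgc h k)
  set h0 : ℝ := -(a * (lam * Δx)) with hh0
  have key : (fun x : ℝ => f (x - a * (lam * Δx))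
      - ∑ ℓ ∈ S, (coef ℓ : ℂ) * f (x + ℓ * Δx))
      = fun x => Q h0 x - ∑ ℓ ∈ S, (coef ℓ : ℂ) * Q ((ℓ:ℝ) * Δx) x := by
    funext x
    have hfh : ∀ h : ℝ, f (x + h) = Q h x
        + ∑ m ∈ Finset.range (k+1), ((h^m / m.factorial : ℝ)) • iteratedDeriv m f x := by
      intro h
      simp only [hQ]
      ring
    have e0 : x - a * (lam * Δx) = x + h0 := by rw [hh0]; ring
    rw [e0]
    simp only [hfh]
    have hpoly : (∑ m ∈ Finset.range (k+1), ((h0^m / m.factorial : ℝ)) • iteratedDeriv m f x)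
        = ∑ ℓ ∈ S, (coef ℓ : ℂ) * ∑ m ∈ Finset.range (k+1),
            ((((ℓ:ℝ)*Δx)^m / m.factorial : ℝ)) • iteratedDeriv m f x := by
      rw [Finset.sum_congr rfl (fun ℓ _ => Finset.mul_sum _ _ _), Finset.sum_comm]
      refine Finset.sum_congr rfl fun m hm => ?_
      rw [Finset.mem_range, Nat.lt_succ_iff] at hm
      have hsum := hcons m hm
      have hterm : ∀ ℓ : ℤ, (coef ℓ : ℂ) * ((((ℓ:ℝ)*Δx)^m / m.factorial : ℝ)) • iteratedDeriv m f x
          = ((coef ℓ * (((ℓ:ℝ)*Δx)^m / m.factorial) : ℝ)) • iteratedDeriv m f x := by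
        intro ℓ
        rw [Complex.real_smul, Complex.real_smul]
        push_cast
        ring
      rw [Finset.sum_congr rfl fun ℓ _ => hterm ℓ, ← Finset.sum_smul]
      congr 1
      have hfac : ∑ ℓ ∈ S, coef ℓ * (((ℓ:ℝ)*Δx)^m / m.factorial)
          = (∑ ℓ ∈ S, coef ℓ * (ℓ:ℝ)^m) * Δx^m / m.factorial := by
        rw [Finset.sum_mul, Finset.sum_div]
        refine Finset.sum_congr rfl fun ℓ _ => ?_
        rw [mul_pow]
        ring
      rw [hfac, hsum, hh0]
      rw [show -(a * (lam * Δx)) = (-(lam*a)) * Δx by ring, mul_pow]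
    rw [Finset.sum_congr rfl (fun ℓ _ => mul_add ((coef ℓ : ℂ)) _ _), Finset.sum_add_distrib,
      hpoly]
    ring
  rw [key]
  have hQsm : ∀ h : ℝ, AEStronglyMeasurable (Q h) volume :=
    fun h => (hQcont h).aestronglyMeasurable
  have hEg : eLpNorm g 2 volume ≠ ∞ := (hmem (k+1) le_rfl).2.ne
  have hsummeas : AEStronglyMeasurable (fun x => ∑ ℓ ∈ S, (coef ℓ : ℂ) * Q ((ℓ:ℝ) * Δx) x)
      volume :=
    (continuous_finset_sum _ fun ℓ _ => continuous_const.mul (hQcont _)).aestronglyMeasurable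
  have step : eLpNorm (fun x => Q h0 x - ∑ ℓ ∈ S, (coef ℓ:ℂ) * Q ((ℓ:ℝ)*Δx) x) 2 volume
      ≤ ENNReal.ofReal (A * Δx^(k+1)) * eLpNorm g 2 volume := by
    calc eLpNorm (fun x => Q h0 x - ∑ ℓ ∈ S, (coef ℓ:ℂ) * Q ((ℓ:ℝ)*Δx) x) 2 volume
        ≤ eLpNorm (Q h0) 2 volume
          + eLpNorm (fun x => ∑ ℓ ∈ S, (coef ℓ:ℂ) * Q ((ℓ:ℝ)*Δx) x) 2 volume :=
          eLpNorm_sub_le (hQsm h0) hsummeas one_le_two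
      _ ≤ ENNReal.ofReal (|h0|^(k+1)) * eLpNorm g 2 volume
          + ∑ ℓ ∈ S, ENNReal.ofReal (|coef ℓ| * (|(ℓ:ℝ)|^(k+1) * Δx^(k+1)))
              * eLpNorm g 2 volume := by
          refine add_le_add (hQbound h0) ?_
          have hfn : (fun x => ∑ ℓ ∈ S, (coef ℓ:ℂ) * Q ((ℓ:ℝ)*Δx) x)
              = ∑ ℓ ∈ S, (fun x => (coef ℓ:ℂ) * Q ((ℓ:ℝ)*Δx) x) := by
            funext y
            rw [Finset.sum_apply]
          rw [hfn]
          refine le_trans (eLpNorm_sum_le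
            (fun ℓ _ => (continuous_const.mul (hQcont _)).aestronglyMeasurable) one_le_two) ?_
          refine Finset.sum_le_sum fun ℓ _ => ?_
          have hce : (fun x => (coef ℓ:ℂ) * Q ((ℓ:ℝ)*Δx) x) = (coef ℓ:ℂ) • Q ((ℓ:ℝ)*Δx) := by
            funext y; rw [Pi.smul_apply, smul_eq_mul]
          rw [hce, eLpNorm_const_smul]
          have hnc : ‖(coef ℓ : ℂ)‖ₑ = ENNReal.ofReal |coef ℓ| := by
            rw [← ofReal_norm_eq_enorm, Complex.norm_real, Real.norm_eq_abs]
          rw [hnc]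
          calc ENNReal.ofReal |coef ℓ| * eLpNorm (Q ((ℓ:ℝ)*Δx)) 2 volume
              ≤ ENNReal.ofReal |coef ℓ|
                * (ENNReal.ofReal (|(ℓ:ℝ)*Δx|^(k+1)) * eLpNorm g 2 volume) :=
                mul_le_mul_right (hQbound _) _
            _ = ENNReal.ofReal (|coef ℓ| * (|(ℓ:ℝ)|^(k+1) * Δx^(k+1)))
                * eLpNorm g 2 volume := by
                rw [← mul_assoc, ← ENNReal.ofReal_mul (abs_nonneg _)]
                congr 3
                rw [abs_mul, mul_pow, abs_of_pos hΔx]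
      _ = ENNReal.ofReal (A * Δx^(k+1)) * eLpNorm g 2 volume := by
          rw [← Finset.sum_mul, ← add_mul]
          congr 1
          rw [← ENNReal.ofReal_sum_of_nonneg (fun ℓ _ => by positivity),
            ← ENNReal.ofReal_add (by positivity)
              (Finset.sum_nonneg fun ℓ _ => by positivity)]
          congr 1
          rw [hA, hh0, add_mul, Finset.sum_mul]
          congr 1
          · rw [abs_neg, abs_of_pos (by positivity), mul_pow]
            ring
          · exact Finset.sum_congr rfl fun ℓ _ => by ring
  set T : ℝ := (eLpNorm g 2 volume).toReal with hT
  have hTnn : 0 ≤ T := ENNReal.toReal_nonneg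
  have hXle : (eLpNorm (fun x => Q h0 x - ∑ ℓ ∈ S, (coef ℓ:ℂ) * Q ((ℓ:ℝ)*Δx) x)
      2 volume).toReal ≤ A * Δx^(k+1) * T := by
    have h2 := ENNReal.toReal_mono (ENNReal.mul_ne_top ENNReal.ofReal_ne_top hEg) step
    rwa [ENNReal.toReal_mul, ENNReal.toReal_ofReal (by positivity)] at h2
  have hTsum : T ≤ ∑ m ∈ Finset.range (k + 2), (eLpNorm (iteratedDeriv m f) 2 volume).toReal := by
    refine Finset.single_le_sum (f := fun m => (eLpNorm (iteratedDeriv m f) 2 volume).toReal)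
      (fun m _ => ENNReal.toReal_nonneg) (Finset.mem_range.2 (by omega))
  have hSnn : 0 ≤ ∑ m ∈ Finset.range (k + 2), (eLpNorm (iteratedDeriv m f) 2 volume).toReal :=
    Finset.sum_nonneg fun m _ => ENNReal.toReal_nonneg
  calc (eLpNorm (fun x => Q h0 x - ∑ ℓ ∈ S, (coef ℓ:ℂ) * Q ((ℓ:ℝ)*Δx) x) 2 volume).toReal
        / (lam * Δx)
      ≤ (A * Δx^(k+1) * T) / (lam * Δx) := by gcongr
    _ = A/lam * Δx^k * T := by
        field_simp
        ring
    _ ≤ (A/lam + 1) * Δx^k *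
          ∑ m ∈ Finset.range (k + 2), (eLpNorm (iteratedDeriv m f) 2 volume).toReal := by
        have h1 : A/lam * Δx^k * T ≤ A/lam * Δx^k *
            ∑ m ∈ Finset.range (k + 2), (eLpNorm (iteratedDeriv m f) 2 volume).toReal := by
          refine mul_le_mul_of_nonneg_left hTsum (by positivity)
        refine h1.trans ?_
        refine mul_le_mul_of_nonneg_right ?_ hSnn
        refine mul_le_mul_of_nonneg_right ?_ (by positivity)
        linarith


/-- Interior consistency error estimate: under the order-`k` consistency relations,
the symbol error satisfies `|e^{-iaλΔxξ} - ∑ a_ℓ e^{iℓΔxξ}| ≤ C (Δx|ξ|)^{k+1}`, and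
consequently the `L²` interior consistency error is `O(Δx^k)` with respect to the
`H^{k+1}` norm of the data. -/
theorem interior_consistency_error (r p k : ℕ) (a lam : ℝ) (ha : 0 < a) (hlam : 0 < lam)
    (coef : ℤ → ℝ)
    (hcons : ∀ m : ℕ, m ≤ k →
      ∑ ℓ ∈ Finset.Icc (-(r : ℤ)) (p : ℤ), coef ℓ * (ℓ : ℝ) ^ m = (-(lam * a)) ^ m) :
    (∃ C > 0, ∀ (ξ Δx : ℝ), 0 < Δx →
      ‖Complex.exp (-(Complex.I * (a * lam * Δx * ξ)))
          - ∑ ℓ ∈ Finset.Icc (-(r : ℤ)) (p : ℤ),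
              (coef ℓ : ℂ) * Complex.exp (Complex.I * (ℓ * Δx * ξ))‖
        ≤ C * (Δx * |ξ|) ^ (k + 1)) ∧
    (∃ C' > 0, ∀ Δx : ℝ, 0 < Δx → ∀ f : ℝ → ℂ,
      ContDiff ℝ (k + 1 : ℕ) f →
      (∀ m : ℕ, m ≤ k + 1 → MemLp (iteratedDeriv m f) 2 volume) →
      (eLpNorm (fun x : ℝ => f (x - a * (lam * Δx))
          - ∑ ℓ ∈ Finset.Icc (-(r : ℤ)) (p : ℤ), (coef ℓ : ℂ) * f (x + ℓ * Δx))
        2 volume).toReal / (lam * Δx)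
      ≤ C' * Δx ^ k *
          ∑ m ∈ Finset.range (k + 2), (eLpNorm (iteratedDeriv m f) 2 volume).toReal) :=
  ⟨part1_aux r p k a lam ha hlam coef hcons, part2_aux r p k a lam ha hlam coef hcons⟩
end

section
/- Boundary Taylor-remainder estimate: let k ≥ 1, g ∈ H^k((0, T+rΔx/a)) (extended suitably), a > 0, Δx > 0, and for ℓ ∈ {1-r, ..., 0} set E_ℓ^n := Σ_{κ=0}^{k-1} [Δx^κ/((κ+1)!(-a)^κ)](ℓ^{κ+1} - (ℓ-1)^{κ+1}) g^{(κ)}(t^n) - (1/Δx)∫_{(ℓ-1)Δx}^{ℓΔx} g(t^n - x/a) dx. Then Σ_{0 ≤ n ≤ T/Δt - 1} Δt Σ_{ℓ=1-r}^0 (E_ℓ^n)² ≤ C Δx^{2k} ‖g^{(k)}‖²_{L²}, with C independent of T, g, Δx. -/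
open MeasureTheory Finset

lemma hasDerivAt_taylorSum (g : ℝ → ℝ) (y : ℝ) :
    ∀ (k : ℕ), ContDiff ℝ ((k+1 : ℕ)) g → ∀ s : ℝ,
      HasDerivAt (fun u => ∑ j ∈ Finset.range (k+1),
          (y - u) ^ j / (j.factorial : ℝ) * iteratedDeriv j g u)
        ((y - s) ^ k / (k.factorial : ℝ) * iteratedDeriv (k+1) g s) s := by
  intro k
  induction k with
  | zero =>
    intro hg s
    have hd : HasDerivAt g (iteratedDeriv 1 g s) s := by
      rw [iteratedDeriv_one]
      exact ((hg.differentiable (by norm_num)) s).hasDerivAt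
    simpa using hd
  | succ k ih =>
    intro hg s
    have hg' : ContDiff ℝ ((k+1 : ℕ)) g := hg.of_le (by exact_mod_cast Nat.le_succ (k+1))
    have H1 := ih hg' s
    have hb : HasDerivAt (iteratedDeriv (k+1) g) (iteratedDeriv (k+2) g s) s := by
      have h2 : iteratedDeriv (k+2) g = deriv (iteratedDeriv (k+1) g) := iteratedDeriv_succ
      rw [h2]
      exact ((hg.differentiable_iteratedDeriv (k+1) (by exact_mod_cast Nat.lt_succ_self (k+1))) s).hasDerivAt
    have ha : HasDerivAt (fun u => (y - u) ^ (k+1) / (((k+1).factorial : ℝ)))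
        ((((k+1):ℝ) * (y - s) ^ k * (-1)) / ((k+1).factorial : ℝ)) s := by
      have := (((hasDerivAt_id s).const_sub y).pow (k+1)).div_const (((k+1).factorial : ℝ))
      push_cast at this ⊢
      simpa using this
    have h2 := (ha.mul hb)
    have H := H1.add h2
    have hk : ((k.factorial : ℝ)) ≠ 0 := Nat.cast_ne_zero.2 k.factorial_ne_zero
    have hk1 : (((k+1).factorial : ℝ)) ≠ 0 := Nat.cast_ne_zero.2 (k+1).factorial_ne_zero
    convert H using 1
    · rfl
    · rfl
    · funext u
      rw [Finset.sum_range_succ]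
      rfl
    · push_cast [Nat.factorial_succ]
      field_simp
      ring

lemma taylor_int_rem (g : ℝ → ℝ) (m : ℕ) (hg : ContDiff ℝ ((m+1 : ℕ)) g) (t y : ℝ) :
    g y - ∑ j ∈ Finset.range (m+1), (y - t) ^ j / (j.factorial : ℝ) * iteratedDeriv j g t
      = ∫ s in t..y, (y - s) ^ m / (m.factorial : ℝ) * iteratedDeriv (m+1) g s := by
  have hcont : Continuous fun s => (y - s) ^ m / (m.factorial : ℝ) * iteratedDeriv (m+1) g s :=
    (((continuous_const.sub continuous_id).pow m).div_const _).mul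
      (hg.continuous_iteratedDeriv (m+1) (by exact_mod_cast le_refl (m+1)))
  have hInt : IntervalIntegrable (fun s => (y - s) ^ m / (m.factorial : ℝ) * iteratedDeriv (m+1) g s)
      volume t y := hcont.intervalIntegrable _ _
  have hFTC := intervalIntegral.integral_eq_sub_of_hasDerivAt
    (f := fun u => ∑ j ∈ Finset.range (m+1), (y - u) ^ j / (j.factorial : ℝ) * iteratedDeriv j g u)
    (fun x _ => hasDerivAt_taylorSum g y m hg x) hInt
  rw [hFTC]
  have hSy : ∑ j ∈ Finset.range (m+1), (y - y) ^ j / (j.factorial : ℝ) * iteratedDeriv j g y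
      = g y := by
    rw [Finset.sum_eq_single 0]
    · simp
    · intro j _ hj0
      simp [sub_self, zero_pow hj0]
    · intro h
      exact absurd (Finset.mem_range.2 (Nat.succ_pos m)) h
  rw [hSy]

lemma rem_bound {f : ℝ → ℝ} (hf : Continuous f) (m : ℕ) (t L u : ℝ)
    (hu0 : 0 ≤ u) (huL : u ≤ L) :
    |∫ s in t..(t+u), (t + u - s) ^ m / (m.factorial : ℝ) * f s|
      ≤ L ^ m / (m.factorial : ℝ) * ∫ s in t..(t+L), |f s| := by
  have hcm : Continuous fun s => (t + u - s) ^ m / (m.factorial : ℝ) * f s :=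
    (((continuous_const.sub continuous_id).pow m).div_const _).mul hf
  have hfac : (0:ℝ) < (m.factorial : ℝ) := by positivity
  have h1 : |∫ s in t..(t+u), (t + u - s) ^ m / (m.factorial : ℝ) * f s|
      ≤ ∫ s in t..(t+u), |(t + u - s) ^ m / (m.factorial : ℝ) * f s| :=
    intervalIntegral.abs_integral_le_integral_abs (by linarith)
  have h2 : ∫ s in t..(t+u), |(t + u - s) ^ m / (m.factorial : ℝ) * f s|
      ≤ ∫ s in t..(t+u), L ^ m / (m.factorial : ℝ) * |f s| := by
    apply intervalIntegral.integral_mono_on (by linarith)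
      (hcm.abs.intervalIntegrable _ _)
      ((continuous_const.mul hf.abs).intervalIntegrable _ _)
    intro s hs
    rw [Set.mem_Icc] at hs
    rw [abs_mul, abs_div, abs_pow, abs_of_pos hfac]
    have hs' : |t + u - s| ≤ L := abs_le.mpr ⟨by linarith, by linarith⟩
    exact mul_le_mul_of_nonneg_right (div_le_div_of_nonneg_right (pow_le_pow_left₀ (abs_nonneg _) hs' m) hfac.le) (abs_nonneg _)
  have hL : (0:ℝ) ≤ L := hu0.trans huL
  have h3 : ∫ s in t..(t+u), L ^ m / (m.factorial : ℝ) * |f s|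
      ≤ ∫ s in t..(t+L), L ^ m / (m.factorial : ℝ) * |f s| := by
    apply intervalIntegral.integral_mono_interval le_rfl (by linarith) (by linarith)
    · filter_upwards with s
      positivity
    · exact (continuous_const.mul hf.abs).intervalIntegrable _ _
  calc |∫ s in t..(t+u), (t + u - s) ^ m / (m.factorial : ℝ) * f s|
      ≤ ∫ s in t..(t+u), |(t + u - s) ^ m / (m.factorial : ℝ) * f s| := h1
    _ ≤ ∫ s in t..(t+u), L ^ m / (m.factorial : ℝ) * |f s| := h2
    _ ≤ ∫ s in t..(t+L), L ^ m / (m.factorial : ℝ) * |f s| := h3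
    _ = L ^ m / (m.factorial : ℝ) * ∫ s in t..(t+L), |f s| :=
        intervalIntegral.integral_const_mul _ _

lemma sq_integral_abs_le {f : ℝ → ℝ} (hf : Continuous f) (t L : ℝ) (hL : 0 ≤ L) :
    (∫ s in t..(t+L), |f s|) ^ 2 ≤ L * ∫ s in t..(t+L), f s ^ 2 := by
  set μ := volume.restrict (Set.Ioc t (t+L)) with hμ
  have hle : t ≤ t + L := by linarith
  haveI : IsFiniteMeasure μ := by
    constructor
    rw [hμ, Measure.restrict_apply_univ, Real.volume_Ioc]
    exact ENNReal.ofReal_lt_top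
  obtain ⟨C, hC⟩ := (isCompact_Icc : IsCompact (Set.Icc t (t+L))).exists_bound_of_continuousOn
    hf.continuousOn
  have hmemf : MemLp (fun s => |f s|) (ENNReal.ofReal 2) μ := by
    apply MemLp.of_bound (hf.abs.aestronglyMeasurable.restrict) C
    filter_upwards [ae_restrict_mem measurableSet_Ioc] with s hs
    simpa using hC s (Set.Ioc_subset_Icc_self hs)
  have hmem1 : MemLp (fun _ : ℝ => (1:ℝ)) (ENNReal.ofReal 2) μ := memLp_const 1
  have hH := MeasureTheory.integral_mul_le_Lp_mul_Lq_of_nonneg (μ := μ)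
    (Real.holderConjugate_iff_eq_conjExponent (by norm_num) |>.mpr (by norm_num))
    (Filter.Eventually.of_forall fun s => abs_nonneg (f s))
    (Filter.Eventually.of_forall fun _ => zero_le_one) hmemf hmem1
  simp only [mul_one, one_pow] at hH
  have hi1 : ∫ (_ : ℝ), (1:ℝ) ∂μ = L := by
    simp [hμ, Real.volume_Ioc, ENNReal.toReal_ofReal hL, hL]
  have hsq : ∫ a, |f a| ^ (2:ℝ) ∂μ = ∫ a, f a ^ 2 ∂μ := by
    apply integral_congr_ae
    filter_upwards with s
    rw [show ((2:ℝ)) = ((2:ℕ):ℝ) by norm_num, Real.rpow_natCast, sq_abs]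
  have h1rpow : ∫ a, (1:ℝ) ^ (2:ℝ) ∂μ = L := by
    simpa using hi1
  rw [hsq, h1rpow] at hH
  have hint_eq : ∫ s in t..(t+L), |f s| = ∫ a, |f a| ∂μ := by
    rw [intervalIntegral.integral_of_le hle]
  have hint_eq2 : ∫ s in t..(t+L), f s ^ 2 = ∫ a, f a ^ 2 ∂μ := by
    rw [intervalIntegral.integral_of_le hle]
  rw [hint_eq, hint_eq2]
  have habs : (0:ℝ) ≤ ∫ a, |f a| ∂μ := integral_nonneg fun s => abs_nonneg _
  have hsqnn : (0:ℝ) ≤ ∫ a, f a ^ 2 ∂μ := integral_nonneg fun s => sq_nonneg _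
  calc (∫ a, |f a| ∂μ) ^ 2 ≤ ((∫ a, f a ^ 2 ∂μ) ^ ((1:ℝ)/2) * L ^ ((1:ℝ)/2)) ^ 2 := by
        apply pow_le_pow_left₀ habs hH
    _ = L * ∫ a, f a ^ 2 ∂μ := by
        rw [mul_pow, ← Real.rpow_natCast ((∫ a, f a ^ 2 ∂μ) ^ ((1:ℝ)/2)) 2,
          ← Real.rpow_natCast (L ^ ((1:ℝ)/2)) 2, ← Real.rpow_mul hsqnn, ← Real.rpow_mul hL]
        norm_num
        ring

lemma integral_sq_eq_eLpNorm {f : ℝ → ℝ} (hf : MemLp f 2 volume) :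
    ∫ x, f x ^ 2 = (eLpNorm f 2 volume).toReal ^ 2 := by
  set F := hf.toLp f with hF
  have h1 : ‖F‖ = (eLpNorm f 2 volume).toReal := Lp.norm_toLp f hf
  have h2 : (inner ℝ F F : ℝ) = ‖F‖ ^ 2 := real_inner_self_eq_norm_sq F
  have h3 : (inner ℝ F F : ℝ) = ∫ a, F a * F a := by
    rw [L2.inner_def]
    congr 1
  have h4 : ∫ a, F a * F a = ∫ x, f x ^ 2 := by
    apply integral_congr_ae
    filter_upwards [hf.coeFn_toLp] with x hx
    rw [hx, sq]
  rw [← h1, ← h2, h3, h4]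

lemma sum_window_le {F : ℝ → ℝ} (hF : Integrable F volume) (h0 : ∀ x, 0 ≤ F x)
    {Δt : ℝ} (hΔt : 0 < Δt) (M N : ℕ) :
    ∑ n ∈ Finset.range N, ∫ s in ((n:ℝ)*Δt)..((n:ℝ)*Δt + (M:ℝ)*Δt), F s
      ≤ (M:ℝ) * ∫ s, F s := by
  set I : ℕ → ℝ := fun p => ∫ s in ((p:ℝ)*Δt)..(((p:ℝ)+1)*Δt), F s with hI
  have hadj : ∀ (c M : ℕ), ∑ i ∈ Finset.range M, I (c + i)
      = ∫ s in ((c:ℝ)*Δt)..(((c:ℝ)+(M:ℝ))*Δt), F s := by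
    intro c M
    induction M with
    | zero => simp
    | succ M ih =>
      rw [Finset.sum_range_succ, ih]
      have hadd := intervalIntegral.integral_add_adjacent_intervals
        (a := (c:ℝ)*Δt) (b := ((c:ℝ)+(M:ℝ))*Δt) (c := ((c:ℝ)+(M:ℝ)+1)*Δt)
        hF.intervalIntegrable hF.intervalIntegrable
      have hIcM : I (c + M) = ∫ s in (((c:ℝ)+(M:ℝ))*Δt)..(((c:ℝ)+(M:ℝ)+1)*Δt), F s := by
        rw [hI]
        push_cast
        ring_nf
      rw [hIcM, hadd]
      push_cast
      ring_nf
  have hone : ∀ c d : ℝ, c ≤ d → ∫ s in c..d, F s ≤ ∫ s, F s := by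
    intro c d hcd
    rw [intervalIntegral.integral_of_le hcd]
    exact setIntegral_le_integral hF (Filter.Eventually.of_forall h0)
  have hwin : ∀ n : ℕ, ∫ s in ((n:ℝ)*Δt)..((n:ℝ)*Δt + (M:ℝ)*Δt), F s
      = ∑ m ∈ Finset.range M, I (n + m) := by
    intro n
    rw [hadj n M]
    congr 1
    ring
  calc ∑ n ∈ Finset.range N, ∫ s in ((n:ℝ)*Δt)..((n:ℝ)*Δt + (M:ℝ)*Δt), F s
      = ∑ n ∈ Finset.range N, ∑ m ∈ Finset.range M, I (n + m) :=
        Finset.sum_congr rfl fun n _ => hwin n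
    _ = ∑ m ∈ Finset.range M, ∑ n ∈ Finset.range N, I (m + n) := by
        rw [Finset.sum_comm]
        exact Finset.sum_congr rfl fun m _ => Finset.sum_congr rfl fun n _ => by rw [add_comm]
    _ ≤ ∑ m ∈ Finset.range M, ∫ s, F s := by
        apply Finset.sum_le_sum
        intro m _
        rw [hadj m N]
        apply hone
        have : (0:ℝ) ≤ (N:ℝ) * Δt := by positivity
        nlinarith
    _ = (M:ℝ) * ∫ s, F s := by
        rw [Finset.sum_const, Finset.card_range, nsmul_eq_mul]

lemma cell_bound {g : ℝ → ℝ} {m : ℕ} (hg : ContDiff ℝ ((m+1:ℕ)) g)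
    {a Δx : ℝ} (ha : 0 < a) (hΔx : 0 < Δx) (r : ℕ) (t : ℝ) {ℓ : ℤ}
    (hℓ : ℓ ∈ Finset.Icc (1 - (r:ℤ)) 0) :
    ((∑ j ∈ Finset.range (m+1), Δx ^ j / ((j + 1).factorial * (-a) ^ j) *
        ((ℓ : ℝ) ^ (j + 1) - ((ℓ : ℝ) - 1) ^ (j + 1)) * iteratedDeriv j g t)
      - (1 / Δx) * ∫ x in (((ℓ : ℝ) - 1) * Δx)..((ℓ : ℝ) * Δx), g (t - x / a)) ^ 2
    ≤ ((r:ℝ)*Δx/a) ^ (2*m+1) / ((m.factorial : ℝ))^2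
        * ∫ s in t..(t + (r:ℝ)*Δx/a), (iteratedDeriv (m+1) g s) ^ 2 := by
  simp only [Finset.mem_Icc] at hℓ
  obtain ⟨hℓ1, hℓ2⟩ := hℓ
  set f := iteratedDeriv (m+1) g with hfdef
  have hfc : Continuous f := hg.continuous_iteratedDeriv (m+1) (by exact_mod_cast le_refl (m+1))
  have hgc : Continuous g := hg.continuous
  set L := (r:ℝ)*Δx/a with hLdef
  have hL0 : 0 ≤ L := by positivity
  set A := ((ℓ:ℝ) - 1) * Δx with hAdef
  set B := (ℓ:ℝ) * Δx with hBdef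
  have hAB : A ≤ B := by
    rw [hAdef, hBdef]
    nlinarith [hΔx]
  set P : ℝ → ℝ := fun x => ∑ j ∈ Finset.range (m+1),
    (-x/a) ^ j / (j.factorial : ℝ) * iteratedDeriv j g t with hPdef
  have hPc : Continuous P := by
    apply continuous_finset_sum
    intro j _
    exact ((((continuous_id.neg).div_const a).pow j).div_const _).mul continuous_const
  have hGc : Continuous fun x => g (t - x / a) :=
    hgc.comp (continuous_const.sub (continuous_id.div_const a))
  -- Step 1: coefficient identity
  have hcoef : ∑ j ∈ Finset.range (m+1), Δx ^ j / ((j + 1).factorial * (-a) ^ j) *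
        ((ℓ : ℝ) ^ (j + 1) - ((ℓ : ℝ) - 1) ^ (j + 1)) * iteratedDeriv j g t
      = (1 / Δx) * ∫ x in A..B, P x := by
    rw [hPdef]
    beta_reduce
    have hfin := intervalIntegral.integral_finset_sum (μ := volume) (a := A) (b := B)
      (f := fun j x => (-x / a) ^ j / (j.factorial:ℝ) * iteratedDeriv j g t)
      (s := Finset.range (m+1))
      (fun j _ => Continuous.intervalIntegrable (by fun_prop) _ _)
    rw [hfin]
    rw [Finset.mul_sum]
    apply Finset.sum_congr rfl
    intro j _
    have hxj : ∫ x in A..B, (-x/a) ^ j / (j.factorial : ℝ) * iteratedDeriv j g t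
        = ((-1/a) ^ j / (j.factorial : ℝ) * iteratedDeriv j g t) * ∫ x in A..B, x ^ j := by
      rw [← intervalIntegral.integral_const_mul]
      apply intervalIntegral.integral_congr
      intro x _
      beta_reduce
      have : (-x/a) ^ j = (-1/a) ^ j * x ^ j := by
        rw [← mul_pow]; congr 1; ring
      rw [this]; ring
    rw [hxj, integral_pow]
    have hfj : (0:ℝ) < (j.factorial : ℝ) := by positivity
    have haj : ((-a):ℝ) ^ j ≠ 0 := pow_ne_zero _ (by linarith)
    have hj1 : ((j:ℝ) + 1) ≠ 0 := by positivity
    have hfs : (((j+1).factorial : ℝ)) = ((j:ℝ)+1) * (j.factorial : ℝ) := by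
      rw [Nat.factorial_succ]; push_cast; ring
    have hm1a : ((-1:ℝ)/a) ^ j = 1 / ((-a) ^ j) := by
      rw [div_pow, neg_pow a j, one_div, mul_inv, ← inv_pow, inv_neg, inv_one, div_eq_mul_inv]
    rw [hfs, hm1a, hBdef, hAdef, mul_pow, mul_pow]
    field_simp
    ring
  have hsub : (∑ j ∈ Finset.range (m+1), Δx ^ j / ((j + 1).factorial * (-a) ^ j) *
        ((ℓ : ℝ) ^ (j + 1) - ((ℓ : ℝ) - 1) ^ (j + 1)) * iteratedDeriv j g t)
      - (1 / Δx) * (∫ x in A..B, g (t - x / a))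
      = (1/Δx) * ∫ x in A..B, (P x - g (t - x / a)) := by
    rw [intervalIntegral.integral_sub (hPc.intervalIntegrable _ _) (hGc.intervalIntegrable _ _),
      hcoef]
    ring
  -- Step 3: pointwise bound on the cell
  set Cb := L ^ m / (m.factorial : ℝ) * ∫ s in t..(t+L), |f s| with hCb
  have key : ∀ x ∈ Set.uIoc A B, ‖P x - g (t - x / a)‖ ≤ Cb := by
    intro x hx
    rw [Set.uIoc_of_le hAB] at hx
    set u := -x/a with hu
    have hx1 : A < x := hx.1
    have hx2 : x ≤ B := hx.2
    have hxB : x ≤ 0 := by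
      have : (ℓ:ℝ) ≤ 0 := by exact_mod_cast hℓ2
      nlinarith
    have hu0 : 0 ≤ u := div_nonneg (neg_nonneg.mpr hxB) ha.le
    have hAr : -((r:ℝ)*Δx) ≤ A := by
      rw [hAdef]
      have : (1:ℝ) - (r:ℝ) ≤ (ℓ:ℝ) := by exact_mod_cast hℓ1
      nlinarith
    have huL : u ≤ L := by
      rw [hu, hLdef]
      gcongr
      linarith
    have hty : t - x / a = t + u := by rw [hu]; ring
    have hrem := taylor_int_rem g m hg t (t + u)
    have hPx : P x = ∑ j ∈ Finset.range (m+1),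
        ((t+u) - t) ^ j / (j.factorial : ℝ) * iteratedDeriv j g t := by
      rw [hPdef]
      beta_reduce
      apply Finset.sum_congr rfl
      intro j _
      rw [add_sub_cancel_left]
    have habs : |P x - g (t - x / a)| = |∫ s in t..(t+u), ((t+u) - s) ^ m / (m.factorial : ℝ) * f s| := by
      rw [hty, hPx, abs_sub_comm, hrem]
    rw [Real.norm_eq_abs, habs]
    exact rem_bound hfc m t L u hu0 huL
  -- Step 4: bound |E|
  have hnorm := intervalIntegral.norm_integral_le_of_norm_le_const key
  have hBA : |B - A| = Δx := by
    rw [hAdef, hBdef, abs_of_pos (by nlinarith)]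
    ring
  rw [hBA] at hnorm
  have hE : |(∑ j ∈ Finset.range (m+1), Δx ^ j / ((j + 1).factorial * (-a) ^ j) *
        ((ℓ : ℝ) ^ (j + 1) - ((ℓ : ℝ) - 1) ^ (j + 1)) * iteratedDeriv j g t)
      - (1 / Δx) * ∫ x in A..B, g (t - x / a)| ≤ Cb := by
    rw [hsub, abs_mul, abs_of_pos (by positivity : (0:ℝ) < 1/Δx)]
    calc 1/Δx * |∫ x in A..B, (P x - g (t - x / a))| ≤ 1/Δx * (Cb * Δx) := by
          apply mul_le_mul_of_nonneg_left _ (by positivity)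
          rw [← Real.norm_eq_abs]
          exact hnorm
      _ = Cb := by field_simp
  -- Step 5: conclude
  have hCb0 : 0 ≤ Cb := le_trans (abs_nonneg _) hE
  calc ((∑ j ∈ Finset.range (m+1), Δx ^ j / ((j + 1).factorial * (-a) ^ j) *
        ((ℓ : ℝ) ^ (j + 1) - ((ℓ : ℝ) - 1) ^ (j + 1)) * iteratedDeriv j g t)
      - (1 / Δx) * ∫ x in A..B, g (t - x / a)) ^ 2
      ≤ Cb ^ 2 := by
        rw [← sq_abs]
        exact pow_le_pow_left₀ (abs_nonneg _) hE 2
    _ = (L ^ m / (m.factorial : ℝ)) ^ 2 * (∫ s in t..(t+L), |f s|) ^ 2 := by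
        rw [hCb]; ring
    _ ≤ (L ^ m / (m.factorial : ℝ)) ^ 2 * (L * ∫ s in t..(t+L), f s ^ 2) := by
        apply mul_le_mul_of_nonneg_left (sq_integral_abs_le hfc t L hL0) (by positivity)
    _ = L ^ (2*m+1) / ((m.factorial : ℝ))^2 * ∫ s in t..(t+L), f s ^ 2 := by
        rw [div_pow, ← pow_mul]
        have : L ^ (m*2) * L = L ^ (2*m+1) := by
          rw [← pow_succ]
          congr 1
          omega
        field_simp
        rw [← this]
        ring

/-- Boundary Taylor-remainder estimate for the inverse Lax-Wendroff ghost cell values: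
the quadratic boundary errors accumulated over the time steps are bounded by
`C Δx^{2k} ‖g^{(k)}‖²_{L²}`, with `C` independent of `T`, `g` and `Δx`. -/
theorem boundary_taylor_remainder_estimate (r k : ℕ) (hk : 1 ≤ k)
    (a lam : ℝ) (ha : 0 < a) (hlam : 0 < lam) :
    ∃ C > 0, ∀ T : ℝ, 1 ≤ T → ∀ Δx : ℝ, 0 < Δx → ∀ g : ℝ → ℝ,
      ContDiff ℝ (k : ℕ) g → MemLp (iteratedDeriv k g) 2 volume →
      ∑ n ∈ Finset.range ⌊T / (lam * Δx)⌋₊, (lam * Δx) *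
          ∑ ℓ ∈ Finset.Icc (1 - (r : ℤ)) 0,
            ((∑ j ∈ Finset.range k,
                Δx ^ j / ((j + 1).factorial * (-a) ^ j) *
                  ((ℓ : ℝ) ^ (j + 1) - ((ℓ : ℝ) - 1) ^ (j + 1)) *
                  iteratedDeriv j g (n * (lam * Δx)))
              - (1 / Δx) *
                  ∫ x in (((ℓ : ℝ) - 1) * Δx)..((ℓ : ℝ) * Δx),
                    g (n * (lam * Δx) - x / a)) ^ 2
        ≤ C * Δx ^ (2 * k) * (eLpNorm (iteratedDeriv k g) 2 volume).toReal ^ 2 := by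
  obtain ⟨m, rfl⟩ : ∃ m, k = m + 1 := ⟨k - 1, by omega⟩
  set K : ℝ := ((r:ℝ)/a) ^ (2*m+1) / ((m.factorial : ℝ))^2 with hK
  set M : ℕ := ⌈(r:ℝ)/(a*lam)⌉₊ with hM
  have hK0 : 0 ≤ K := by positivity
  refine ⟨lam * r * K * M + 1, by positivity, ?_⟩
  intro T hT Δx hΔx g hg hmem
  set f := iteratedDeriv (m+1) g with hf
  have hfc : Continuous f := hg.continuous_iteratedDeriv (m+1) (by exact_mod_cast le_refl (m+1))
  set Δt := lam * Δx with hΔt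
  have hΔt0 : 0 < Δt := by positivity
  set N := ⌊T / Δt⌋₊ with hN
  have hFint : Integrable (fun x => f x ^ 2) volume := hmem.integrable_sq
  set W : ℕ → ℝ := fun n => ∫ s in ((n:ℝ)*Δt)..((n:ℝ)*Δt + (M:ℝ)*Δt), f s ^ 2 with hW
  set L : ℝ := (r:ℝ)*Δx/a with hL
  have hL0 : 0 ≤ L := by positivity
  have hLM : L ≤ (M:ℝ) * Δt := by
    have h1 : (r:ℝ)/(a*lam) ≤ (M:ℝ) := Nat.le_ceil _
    rw [hL, hΔt]
    rw [div_le_iff₀ ha] at *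
    calc (r:ℝ)*Δx = ((r:ℝ)/(a*lam)) * (lam * Δx) * a := by field_simp
      _ ≤ (M:ℝ) * (lam * Δx) * a := by
          apply mul_le_mul_of_nonneg_right _ ha.le
          apply mul_le_mul_of_nonneg_right h1 (by positivity)
  have hwinmono : ∀ n : ℕ, ∫ s in ((n:ℝ)*Δt)..((n:ℝ)*Δt + L), f s ^ 2 ≤ W n := by
    intro n
    apply intervalIntegral.integral_mono_interval le_rfl (by linarith) (by linarith)
      (Filter.Eventually.of_forall fun s => sq_nonneg _) (hFint.intervalIntegrable)
  have hLpow : L ^ (2*m+1) = ((r:ℝ)/a) ^ (2*m+1) * Δx ^ (2*m+1) := by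
    rw [hL, ← mul_pow]
    congr 1
    ring
  have hcard : (Finset.Icc (1 - (r:ℤ)) 0).card = r := by
    rw [Int.card_Icc]
    omega
  have step1 : ∀ n ∈ Finset.range N,
      (lam * Δx) * ∑ ℓ ∈ Finset.Icc (1 - (r : ℤ)) 0,
        ((∑ j ∈ Finset.range (m+1),
            Δx ^ j / ((j + 1).factorial * (-a) ^ j) *
              ((ℓ : ℝ) ^ (j + 1) - ((ℓ : ℝ) - 1) ^ (j + 1)) *
              iteratedDeriv j g (n * (lam * Δx)))
          - (1 / Δx) *
              ∫ x in (((ℓ : ℝ) - 1) * Δx)..((ℓ : ℝ) * Δx),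
                g (n * (lam * Δx) - x / a)) ^ 2
      ≤ (Δt * ((r:ℝ) * (K * Δx ^ (2*m+1)))) * W n := by
    intro n _
    have hsumℓ : ∑ ℓ ∈ Finset.Icc (1 - (r : ℤ)) 0,
        ((∑ j ∈ Finset.range (m+1),
            Δx ^ j / ((j + 1).factorial * (-a) ^ j) *
              ((ℓ : ℝ) ^ (j + 1) - ((ℓ : ℝ) - 1) ^ (j + 1)) *
              iteratedDeriv j g (n * (lam * Δx)))
          - (1 / Δx) *
              ∫ x in (((ℓ : ℝ) - 1) * Δx)..((ℓ : ℝ) * Δx),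
                g (n * (lam * Δx) - x / a)) ^ 2
        ≤ (r:ℝ) * ((K * Δx ^ (2*m+1)) * W n) := by
      calc _ ≤ ∑ _ℓ ∈ Finset.Icc (1 - (r : ℤ)) 0, (K * Δx ^ (2*m+1)) * W n := by
            apply Finset.sum_le_sum
            intro ℓ hℓ
            have hc := cell_bound hg ha hΔx r ((n:ℝ) * (lam * Δx)) hℓ
            calc _ ≤ ((r:ℝ)*Δx/a) ^ (2*m+1) / ((m.factorial : ℝ))^2
                  * ∫ s in ((n:ℝ) * (lam*Δx))..(((n:ℝ) * (lam*Δx)) + (r:ℝ)*Δx/a),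
                      (iteratedDeriv (m+1) g s) ^ 2 := hc
              _ ≤ (K * Δx ^ (2*m+1)) * W n := by
                  have h1 : ((r:ℝ)*Δx/a) ^ (2*m+1) / ((m.factorial : ℝ))^2
                      = K * Δx ^ (2*m+1) := by
                    rw [hK, ← hL, hLpow]
                    ring
                  rw [h1]
                  apply mul_le_mul_of_nonneg_left _ (by positivity)
                  exact hwinmono n
        _ = (r:ℝ) * ((K * Δx ^ (2*m+1)) * W n) := by
            rw [Finset.sum_const, hcard, nsmul_eq_mul]
    calc (lam * Δx) * _ ≤ (lam * Δx) * ((r:ℝ) * ((K * Δx ^ (2*m+1)) * W n)) :=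
          mul_le_mul_of_nonneg_left hsumℓ (by positivity)
      _ = (Δt * ((r:ℝ) * (K * Δx ^ (2*m+1)))) * W n := by rw [hΔt]; ring
  calc ∑ n ∈ Finset.range N, (lam * Δx) * ∑ ℓ ∈ Finset.Icc (1 - (r : ℤ)) 0,
        ((∑ j ∈ Finset.range (m+1),
            Δx ^ j / ((j + 1).factorial * (-a) ^ j) *
              ((ℓ : ℝ) ^ (j + 1) - ((ℓ : ℝ) - 1) ^ (j + 1)) *
              iteratedDeriv j g (n * (lam * Δx)))
          - (1 / Δx) *
              ∫ x in (((ℓ : ℝ) - 1) * Δx)..((ℓ : ℝ) * Δx),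
                g (n * (lam * Δx) - x / a)) ^ 2
      ≤ ∑ n ∈ Finset.range N, (Δt * ((r:ℝ) * (K * Δx ^ (2*m+1)))) * W n :=
        Finset.sum_le_sum step1
    _ = (Δt * ((r:ℝ) * (K * Δx ^ (2*m+1)))) * ∑ n ∈ Finset.range N, W n :=
        (Finset.mul_sum _ _ _).symm
    _ ≤ (Δt * ((r:ℝ) * (K * Δx ^ (2*m+1)))) * ((M:ℝ) * ∫ s, f s ^ 2) := by
        apply mul_le_mul_of_nonneg_left _ (by positivity)
        exact sum_window_le hFint (fun x => sq_nonneg _) hΔt0 M N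
    _ = (lam * r * K * M) * Δx ^ (2*(m+1)) * ∫ s, f s ^ 2 := by
        rw [hΔt]
        have : Δx ^ (2*(m+1)) = Δx ^ (2*m+1) * Δx := by
          rw [← pow_succ, show 2*m+1+1 = 2*(m+1) by omega]
        rw [this]
        ring
    _ = (lam * r * K * M) * Δx ^ (2*(m+1)) * (eLpNorm f 2 volume).toReal ^ 2 := by
        rw [integral_sq_eq_eLpNorm hmem]
    _ ≤ (lam * r * K * M + 1) * Δx ^ (2*(m+1)) * (eLpNorm f 2 volume).toReal ^ 2 := by
        apply mul_le_mul_of_nonneg_right _ (sq_nonneg _)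
        apply mul_le_mul_of_nonneg_right _ (by positivity)
        linarith
end
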